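/- Let Q be a polynomial of degree k ≥ 1 and m ≥ 2 a natural number. Then max over |z|=1 of |Q(z)|^2 is at most (m/(m-1)) times the maximum of |Q(ω)|^2 over all (2mk)-th roots of unity ω. -/

import Mathlib

open Finset Complex

lemma sum_zpow_root {N : ℕ} {ζ : ℂ} (hζ : IsPrimitiveRoot ζ N) (d : ℤ) :
    ∑ t ∈ range N, ζ ^ ((t : ℤ) * d) = if (N : ℤ) ∣ d then (N : ℂ) else 0 := by
  have hz1 : ∀ t : ℕ, ζ ^ ((t : ℤ) * d) = (ζ ^ d) ^ t := by
    intro t; rw [mul_comm, zpow_mul, zpow_natCast]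
  simp_rw [hz1]
  by_cases h : (N : ℤ) ∣ d
  · rw [if_pos h]
    have : ζ ^ d = 1 := (hζ.zpow_eq_one_iff_dvd d).mpr h
    simp [this]
  · rw [if_neg h]
    have hne : ζ ^ d ≠ 1 := fun hc => h ((hζ.zpow_eq_one_iff_dvd d).mp hc)
    rw [geom_sum_eq hne]
    have h1 : (ζ ^ d) ^ N = 1 := by
      rw [← zpow_natCast, ← zpow_mul, mul_comm, zpow_mul, hζ.zpow_eq_one, one_zpow]
    rw [h1, sub_self, zero_div]

lemma count_pairs (n p q : ℕ) (hq : q ≤ p) (hd : p - q ≤ n) :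
    ((range n ×ˢ range n).filter (fun ab : ℕ × ℕ => p + ab.2 = q + ab.1)).card
      = n - (p - q) := by
  have : ((range n ×ˢ range n).filter (fun ab : ℕ × ℕ => p + ab.2 = q + ab.1))
      = (range (n - (p - q))).image (fun b => (b + (p - q), b)) := by
    ext ⟨a, b⟩
    simp only [mem_filter, mem_product, mem_range, mem_image, Prod.mk.injEq]
    constructor
    · rintro ⟨⟨ha, hb⟩, he⟩
      exact ⟨b, by omega, by omega, rfl⟩
    · rintro ⟨b', hb', h1, h2⟩
      omega
  rw [this, Finset.card_image_of_injective _ (fun x y h => (Prod.mk.injEq _ _ _ _ ▸ h).2),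
    Finset.card_range]

lemma count_swap (n p q : ℕ) :
    ((range n ×ˢ range n).filter (fun ab : ℕ × ℕ => p + ab.2 = q + ab.1)).card
      = ((range n ×ˢ range n).filter (fun ab : ℕ × ℕ => q + ab.2 = p + ab.1)).card := by
  apply Finset.card_bij' (fun ab _ => (ab.2, ab.1)) (fun ab _ => (ab.2, ab.1))
  all_goals intro ab h
  all_goals first
    | rfl
    | (simp only [mem_filter, mem_product, mem_range] at h ⊢; omega)

lemma key_sum {N : ℕ} {ζ : ℂ} (hζ : IsPrimitiveRoot ζ N) (hN : 0 < N)
    (K n : ℕ) (hnN : K + n ≤ N + 1) (c : ℕ → ℂ)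
    {z : ℂ} (hz : ‖z‖ = 1) :
    ∑ t ∈ range N,
      ((∑ p ∈ range K, c p * (ζ ^ t) ^ p) *
          (starRingEnd ℂ) (∑ p ∈ range K, c p * (ζ ^ t) ^ p) *
        ((∑ a ∈ range n, (z * (starRingEnd ℂ) (ζ ^ t)) ^ a) *
          (starRingEnd ℂ) (∑ a ∈ range n, (z * (starRingEnd ℂ) (ζ ^ t)) ^ a)))
    = (N : ℂ) * ∑ pq ∈ range K ×ˢ range K,
        c pq.1 * (starRingEnd ℂ) (c pq.2) * z ^ pq.1 * (starRingEnd ℂ) z ^ pq.2 *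
          (((range n ×ˢ range n).filter
              (fun ab : ℕ × ℕ => pq.1 + ab.2 = pq.2 + ab.1)).card : ℂ) := by
  have hz0 : z ≠ 0 := by
    intro h; rw [h] at hz; simp at hz
  have hcz : (starRingEnd ℂ) z = z⁻¹ := (Complex.inv_eq_conj hz).symm
  have hζa : ‖ζ‖ = 1 := Complex.norm_eq_one_of_pow_eq_one hζ.pow_eq_one hN.ne'
  have hζ0 : ζ ≠ 0 := by intro h; rw [h] at hζa; simp at hζa
  have hcζ : (starRingEnd ℂ) ζ = ζ⁻¹ := (Complex.inv_eq_conj hζa).symm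
  have exp1 : ∀ t : ℕ,
      (∑ p ∈ range K, c p * (ζ ^ t) ^ p) *
          (starRingEnd ℂ) (∑ p ∈ range K, c p * (ζ ^ t) ^ p) *
        ((∑ a ∈ range n, (z * (starRingEnd ℂ) (ζ ^ t)) ^ a) *
          (starRingEnd ℂ) (∑ a ∈ range n, (z * (starRingEnd ℂ) (ζ ^ t)) ^ a))
      = ∑ pq ∈ range K ×ˢ range K, ∑ ab ∈ range n ×ˢ range n,
          c pq.1 * (starRingEnd ℂ) (c pq.2) * z ^ ((ab.1 : ℤ) - (ab.2 : ℤ)) *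
            ζ ^ ((t : ℤ) * ((pq.1 : ℤ) + (ab.2 : ℤ) - (pq.2 : ℤ) - (ab.1 : ℤ))) := by
    intro t
    rw [map_sum, map_sum, Finset.sum_mul_sum, ← Finset.sum_product',
      Finset.sum_mul_sum, ← Finset.sum_product', Finset.sum_mul_sum]
    refine Finset.sum_congr rfl fun pq _ => Finset.sum_congr rfl fun ab _ => ?_
    simp only [map_mul, map_pow, map_inv₀, Complex.conj_conj, hcz, hcζ, inv_pow, inv_inv]
    have e1 : ζ ^ ((t : ℤ) * ((pq.1 : ℤ) + (ab.2 : ℤ) - (pq.2 : ℤ) - (ab.1 : ℤ)))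
        = ζ ^ (t * pq.1 + t * ab.2) / ζ ^ (t * pq.2 + t * ab.1) := by
      rw [eq_div_iff (pow_ne_zero _ hζ0), ← zpow_natCast ζ (t * pq.2 + t * ab.1),
        ← zpow_natCast ζ (t * pq.1 + t * ab.2), ← zpow_add₀ hζ0]
      congr 1; push_cast; ring
    have e2 : z ^ ((ab.1 : ℤ) - (ab.2 : ℤ)) = z ^ ab.1 / z ^ ab.2 := by
      rw [zpow_sub₀ hz0, zpow_natCast, zpow_natCast]
    rw [e1, e2]
    field_simp
    have hA : ζ ^ (t * ab.1) * ζ⁻¹ ^ (t * ab.1) = 1 := by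
      rw [inv_pow, mul_inv_cancel₀ (pow_ne_zero _ hζ0)]
    have hB : z ^ ab.2 * z⁻¹ ^ ab.2 = 1 := by
      rw [inv_pow, mul_inv_cancel₀ (pow_ne_zero _ hz0)]
    linear_combination (c pq.1 * ζ ^ (t * pq.1) * ζ ^ (t * ab.2) * ζ ^ (t * pq.2) *
      (starRingEnd ℂ) (c pq.2) * z ^ ab.1) * (z ^ ab.2 * z⁻¹ ^ ab.2) * hA +
      (c pq.1 * ζ ^ (t * pq.1) * ζ ^ (t * ab.2) * ζ ^ (t * pq.2) *
      (starRingEnd ℂ) (c pq.2) * z ^ ab.1) * hB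
  rw [Finset.sum_congr rfl fun t _ => exp1 t, Finset.sum_comm]
  conv_rhs => rw [Finset.mul_sum]
  refine Finset.sum_congr rfl fun pq hpq => ?_
  simp only [mem_product, mem_range] at hpq
  rw [Finset.sum_comm]
  calc ∑ ab ∈ range n ×ˢ range n, ∑ t ∈ range N,
        c pq.1 * (starRingEnd ℂ) (c pq.2) * z ^ ((ab.1 : ℤ) - (ab.2 : ℤ)) *
          ζ ^ ((t : ℤ) * ((pq.1 : ℤ) + (ab.2 : ℤ) - (pq.2 : ℤ) - (ab.1 : ℤ)))
      = ∑ ab ∈ range n ×ˢ range n,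
          (if pq.1 + ab.2 = pq.2 + ab.1 then
            c pq.1 * (starRingEnd ℂ) (c pq.2) * z ^ pq.1 * (starRingEnd ℂ) z ^ pq.2 * N
           else 0) := by
        refine Finset.sum_congr rfl fun ab hab => ?_
        simp only [mem_product, mem_range] at hab
        rw [← Finset.mul_sum, sum_zpow_root hζ]
        by_cases h : pq.1 + ab.2 = pq.2 + ab.1
        · have hd0 : ((pq.1 : ℤ) + (ab.2 : ℤ) - (pq.2 : ℤ) - (ab.1 : ℤ)) = 0 := by omega
          have hab' : ((ab.1 : ℤ)) - (ab.2 : ℤ) = (pq.1 : ℤ) - (pq.2 : ℤ) := by omega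
          rw [hd0, if_pos (dvd_zero _), if_pos h, hab', zpow_sub₀ hz0, zpow_natCast,
            zpow_natCast, hcz, div_eq_mul_inv, ← inv_pow]
          ring
        · have hd : ¬ ((N : ℤ) ∣ ((pq.1 : ℤ) + (ab.2 : ℤ) - (pq.2 : ℤ) - (ab.1 : ℤ))) := by
            intro hdvd
            have := Int.eq_zero_of_abs_lt_dvd hdvd (by rw [abs_lt]; constructor <;> omega)
            omega
          rw [if_neg hd, if_neg h, mul_zero]
    _ = ∑ ab ∈ (range n ×ˢ range n).filter (fun ab : ℕ × ℕ => pq.1 + ab.2 = pq.2 + ab.1),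
          (c pq.1 * (starRingEnd ℂ) (c pq.2) * z ^ pq.1 * (starRingEnd ℂ) z ^ pq.2 * N) :=
        (Finset.sum_filter _ _).symm
    _ = _ := by rw [Finset.sum_const, nsmul_eq_mul]; ring

lemma count_pairs' (n p q : ℕ) (h : max p q - min p q ≤ n) :
    ((range n ×ˢ range n).filter (fun ab : ℕ × ℕ => p + ab.2 = q + ab.1)).card
      = n - (max p q - min p q) := by
  rcases le_total q p with h1 | h1
  · rw [count_pairs n p q h1 (by omega)]; omega
  · rw [count_swap, count_pairs n q p h1 (by omega)]; omega

/-- For a polynomial `Q` of degree `k ≥ 1` and `m ≥ 2`, the maximum of `|Q(z)|²` over the unit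
circle is at most `m/(m-1)` times the maximum of `|Q(ω)|²` over the `2mk`-th roots of unity. -/
theorem max_circle_le_roots_of_unity (k m : ℕ) (hk : 1 ≤ k) (hm : 2 ≤ m)
    (Q : Polynomial ℂ) (hQ : Q.natDegree ≤ k) (z : ℂ) (hz : ‖z‖ = 1) :
    ‖Q.eval z‖ ^ 2 ≤
      ((m : ℝ) / ((m : ℝ) - 1)) *
        sSup {y : ℝ | ∃ ω : ℂ, ω ^ (2 * m * k) = 1 ∧ y = ‖Q.eval ω‖ ^ 2} := by
  have hk2 : Q.natDegree < k + 1 := by omega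
  set N := 2 * m * k with hNdef
  have hN : 0 < N := by
    have : 0 < 2 * m := by omega
    exact Nat.mul_pos this (by omega)
  obtain ⟨ζ, hζ⟩ : ∃ ζ : ℂ, IsPrimitiveRoot ζ N := ⟨_, Complex.isPrimitiveRoot_exp N hN.ne'⟩
  have hev : ∀ w : ℂ, Q.eval w = ∑ p ∈ range (k + 1), Q.coeff p * w ^ p := fun w =>
    Q.eval_eq_sum_range' hk2 w
  have hkm : k ≤ k * m := Nat.le_mul_of_pos_right k (by omega)
  have hnA : (k + 1) + k * m ≤ N + 1 := by
    have : (k + 1) + k * m ≤ 2 * m * k + 1 := by nlinarith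
    omega
  have hnB : (k + 1) + k ≤ N + 1 := by
    have : 2 * k ≤ 2 * m * k := by nlinarith
    omega
  have hnC : 1 + k * m ≤ N + 1 := by
    have : k * m ≤ 2 * m * k := by nlinarith
    omega
  have hA := key_sum hζ hN (k + 1) (k * m) hnA Q.coeff hz
  have hB := key_sum hζ hN (k + 1) k hnB Q.coeff hz
  have hC := key_sum hζ hN 1 (k * m) hnC (fun _ => (1 : ℂ)) hz
  -- the count difference
  have hcnt : ∀ pq ∈ range (k + 1) ×ˢ range (k + 1),
      (((range (k * m) ×ˢ range (k * m)).filter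
          (fun ab : ℕ × ℕ => pq.1 + ab.2 = pq.2 + ab.1)).card : ℂ)
        = (((range k ×ˢ range k).filter
            (fun ab : ℕ × ℕ => pq.1 + ab.2 = pq.2 + ab.1)).card : ℂ) + ((k * m - k : ℕ) : ℂ) := by
    intro pq hpq
    simp only [mem_product, mem_range] at hpq
    have hD : max pq.1 pq.2 - min pq.1 pq.2 ≤ k := by omega
    rw [count_pairs' (k * m) _ _ (le_trans hD hkm), count_pairs' k _ _ hD]
    push_cast [Nat.cast_sub (le_trans hD hkm), Nat.cast_sub hD, Nat.cast_sub hkm]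
    ring
  -- factorization of the coefficient double sum
  have hfac : ∑ pq ∈ range (k + 1) ×ˢ range (k + 1),
      Q.coeff pq.1 * (starRingEnd ℂ) (Q.coeff pq.2) * z ^ pq.1 * (starRingEnd ℂ) z ^ pq.2
      = Q.eval z * (starRingEnd ℂ) (Q.eval z) := by
    rw [hev z, map_sum, Finset.sum_mul_sum, ← Finset.sum_product']
    refine Finset.sum_congr rfl fun pq _ => ?_
    rw [map_mul, map_pow]
    ring
  -- the combined complex identity
  have hAB : (∑ t ∈ range N,
      ((∑ p ∈ range (k + 1), Q.coeff p * (ζ ^ t) ^ p) *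
          (starRingEnd ℂ) (∑ p ∈ range (k + 1), Q.coeff p * (ζ ^ t) ^ p) *
        ((∑ a ∈ range (k * m), (z * (starRingEnd ℂ) (ζ ^ t)) ^ a) *
          (starRingEnd ℂ) (∑ a ∈ range (k * m), (z * (starRingEnd ℂ) (ζ ^ t)) ^ a))))
      - (∑ t ∈ range N,
      ((∑ p ∈ range (k + 1), Q.coeff p * (ζ ^ t) ^ p) *
          (starRingEnd ℂ) (∑ p ∈ range (k + 1), Q.coeff p * (ζ ^ t) ^ p) *
        ((∑ a ∈ range k, (z * (starRingEnd ℂ) (ζ ^ t)) ^ a) *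
          (starRingEnd ℂ) (∑ a ∈ range k, (z * (starRingEnd ℂ) (ζ ^ t)) ^ a))))
      = (N : ℂ) * ((k * m - k : ℕ) : ℂ) * (Q.eval z * (starRingEnd ℂ) (Q.eval z)) := by
    rw [hA, hB, ← mul_sub, ← Finset.sum_sub_distrib]
    have hstep : ∀ pq ∈ range (k + 1) ×ˢ range (k + 1),
        Q.coeff pq.1 * (starRingEnd ℂ) (Q.coeff pq.2) * z ^ pq.1 * (starRingEnd ℂ) z ^ pq.2 *
            (((range (k * m) ×ˢ range (k * m)).filter
                (fun ab : ℕ × ℕ => pq.1 + ab.2 = pq.2 + ab.1)).card : ℂ)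
          - Q.coeff pq.1 * (starRingEnd ℂ) (Q.coeff pq.2) * z ^ pq.1 * (starRingEnd ℂ) z ^ pq.2 *
            (((range k ×ˢ range k).filter
                (fun ab : ℕ × ℕ => pq.1 + ab.2 = pq.2 + ab.1)).card : ℂ)
        = Q.coeff pq.1 * (starRingEnd ℂ) (Q.coeff pq.2) * z ^ pq.1 * (starRingEnd ℂ) z ^ pq.2 *
            ((k * m - k : ℕ) : ℂ) := fun pq hpq => by rw [hcnt pq hpq]; ring
    rw [Finset.sum_congr rfl hstep, ← Finset.sum_mul, hfac]
    ring
  -- simplify hC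
  have hcnt0 : ((range (k * m) ×ˢ range (k * m)).filter
      (fun ab : ℕ × ℕ => 0 + ab.2 = 0 + ab.1)).card = k * m := by
    have := count_pairs (k * m) 0 0 (le_refl 0) (Nat.zero_le _)
    simpa using this
  have hC' : ∑ t ∈ range N,
      ((∑ a ∈ range (k * m), (z * (starRingEnd ℂ) (ζ ^ t)) ^ a) *
        (starRingEnd ℂ) (∑ a ∈ range (k * m), (z * (starRingEnd ℂ) (ζ ^ t)) ^ a))
      = (N : ℂ) * (k * m : ℕ) := by
    have h2 := hC
    simp only [Finset.range_one, Finset.sum_singleton, pow_zero, mul_one, one_mul, map_one,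
      Finset.singleton_product, Finset.sum_map, Function.Embedding.coeFn_mk] at h2
    rw [h2, hcnt0]
  -- transfer to ℝ
  simp only [Complex.mul_conj] at hAB hC'
  have hreal1 : (∑ t ∈ range N,
        Complex.normSq (∑ p ∈ range (k + 1), Q.coeff p * (ζ ^ t) ^ p) *
          Complex.normSq (∑ a ∈ range (k * m), (z * (starRingEnd ℂ) (ζ ^ t)) ^ a))
      - (∑ t ∈ range N,
        Complex.normSq (∑ p ∈ range (k + 1), Q.coeff p * (ζ ^ t) ^ p) *
          Complex.normSq (∑ a ∈ range k, (z * (starRingEnd ℂ) (ζ ^ t)) ^ a))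
      = (N : ℝ) * ((k * m - k : ℕ) : ℝ) * Complex.normSq (Q.eval z) := by
    exact_mod_cast hAB
  have hreal2 : (∑ t ∈ range N,
      Complex.normSq (∑ a ∈ range (k * m), (z * (starRingEnd ℂ) (ζ ^ t)) ^ a))
      = (N : ℝ) * ((k * m : ℕ) : ℝ) := by
    exact_mod_cast hC'
  -- the sup
  set S : Set ℝ := {y : ℝ | ∃ ω : ℂ, ω ^ N = 1 ∧ y = ‖Q.eval ω‖ ^ 2} with hSdef
  have hbdd : BddAbove S := by
    have hsub : S ⊆ (fun ω : ℂ => ‖Q.eval ω‖ ^ 2) '' {ω : ℂ | ω ^ N = 1} := by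
      rintro y ⟨ω, h1, h2⟩; exact ⟨ω, h1, h2.symm⟩
    have hfin1 : ({ω : ℂ | ω ^ N = 1}).Finite := by
      refine Set.Finite.subset (Polynomial.nthRootsFinset N (1 : ℂ)).finite_toSet fun x hx => ?_
      rw [Finset.mem_coe, Polynomial.mem_nthRootsFinset hN 1]
      exact hx
    exact ((hfin1.image _).subset hsub).bddAbove
  have hM : ∀ t : ℕ, Complex.normSq (∑ p ∈ range (k + 1), Q.coeff p * (ζ ^ t) ^ p) ≤ sSup S := by
    intro t
    rw [← hev (ζ ^ t)]
    refine le_csSup hbdd ⟨ζ ^ t, ?_, (Complex.sq_norm _).symm⟩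
    rw [← pow_mul, mul_comm t N, pow_mul, hζ.pow_eq_one, one_pow]
  -- the inequality chain
  have hle1 : (N : ℝ) * ((k * m - k : ℕ) : ℝ) * Complex.normSq (Q.eval z)
      ≤ sSup S * ((N : ℝ) * ((k * m : ℕ) : ℝ)) := by
    rw [← hreal1, ← hreal2, Finset.mul_sum]
    have h0 : (0:ℝ) ≤ ∑ t ∈ range N,
        Complex.normSq (∑ p ∈ range (k + 1), Q.coeff p * (ζ ^ t) ^ p) *
          Complex.normSq (∑ a ∈ range k, (z * (starRingEnd ℂ) (ζ ^ t)) ^ a) :=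
      Finset.sum_nonneg fun t _ => mul_nonneg (Complex.normSq_nonneg _) (Complex.normSq_nonneg _)
    have h1 : (∑ t ∈ range N,
        Complex.normSq (∑ p ∈ range (k + 1), Q.coeff p * (ζ ^ t) ^ p) *
          Complex.normSq (∑ a ∈ range (k * m), (z * (starRingEnd ℂ) (ζ ^ t)) ^ a))
        ≤ ∑ t ∈ range N, sSup S *
          Complex.normSq (∑ a ∈ range (k * m), (z * (starRingEnd ℂ) (ζ ^ t)) ^ a) :=
      Finset.sum_le_sum fun t _ =>
        mul_le_mul_of_nonneg_right (hM t) (Complex.normSq_nonneg _)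
    linarith
  -- final arithmetic
  rw [show ‖Q.eval z‖ ^ 2 = Complex.normSq (Q.eval z) from Complex.sq_norm _]
  have hm1 : (0:ℝ) < (m : ℝ) - 1 := by
    have : (2:ℝ) ≤ (m : ℝ) := by exact_mod_cast hm
    linarith
  rw [div_mul_eq_mul_div, le_div_iff₀ hm1]
  have hNc : ((N : ℕ) : ℝ) = 2 * (m : ℝ) * (k : ℝ) := by rw [hNdef]; push_cast; ring
  have hcast : ((k * m - k : ℕ) : ℝ) = (k : ℝ) * ((m : ℝ) - 1) := by
    rw [Nat.cast_sub hkm]; push_cast; ring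
  rw [hNc, hcast] at hle1
  push_cast at hle1
  have hkpos : (0:ℝ) < (k : ℝ) := by exact_mod_cast hk
  have hmpos : (0:ℝ) < (m : ℝ) := by positivity
  have hc : (0:ℝ) < 2 * (m : ℝ) * (k : ℝ) * (k : ℝ) := by positivity
  have h2 : (2 * (m : ℝ) * (k : ℝ) * (k : ℝ)) * (Complex.normSq (Q.eval z) * ((m : ℝ) - 1))
      ≤ (2 * (m : ℝ) * (k : ℝ) * (k : ℝ)) * ((m : ℝ) * sSup S) := by nlinarith [hle1]
  exact le_of_mul_le_mul_left h2 hc
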